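/- If h₁ : ℝ → Λ₁ and h₂ : ℝ → Λ₂ are uniformly continuous with Λ₁, Λ₂ compact, ‖h₁(t+μₙ) − h₁(t)‖ → 0 and ‖h₂(t+μₙ) − h₂(t)‖ → 0 uniformly on compact subsets of ℝ (with the same sequence μₙ → ∞), and there exist ε₀, ε₁ > 0, r₁ > 0 and a common sequence θₙ → ∞ with ‖h₁(t+μₙ) − h₁(t)‖ ≥ ε₀ and ‖h₂(t+μₙ) − h₂(t)‖ ≥ ε₁ for all t ∈ [θₙ−r₁, θₙ+r₁], then the pair function h(t) = (h₁(t), h₂(t)) is unpredictable with unpredictability constant √(ε₀² + ε₁²). -/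

import Mathlib

open Set Filter

def Unpredictable {E : Type*} [NormedAddCommGroup E] (h : ℝ → E) : Prop :=
  UniformContinuous h ∧
  ∃ ε₀ > (0 : ℝ), ∃ r > (0 : ℝ), ∃ μ ν : ℕ → ℝ,
    Tendsto μ atTop atTop ∧ Tendsto ν atTop atTop ∧
    (∀ C : Set ℝ, IsCompact C → ∀ ε > 0, ∃ N, ∀ n ≥ N, ∀ t ∈ C,
      ‖h (t + μ n) - h t‖ < ε) ∧
    ∀ n, ∀ t ∈ Icc (ν n - r) (ν n + r), ε₀ ≤ ‖h (t + μ n) - h t‖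

theorem pair_unpredictable (p q : ℕ)
    (h₁ : ℝ → EuclideanSpace ℝ (Fin p)) (h₂ : ℝ → EuclideanSpace ℝ (Fin q))
    (Λ₁ : Set (EuclideanSpace ℝ (Fin p))) (Λ₂ : Set (EuclideanSpace ℝ (Fin q)))
    (hΛ₁ : IsCompact Λ₁) (hΛ₂ : IsCompact Λ₂)
    (hmem₁ : ∀ t, h₁ t ∈ Λ₁) (hmem₂ : ∀ t, h₂ t ∈ Λ₂)
    (huc₁ : UniformContinuous h₁) (huc₂ : UniformContinuous h₂)
    (μ θ : ℕ → ℝ) (hμ : Tendsto μ atTop atTop) (hθ : Tendsto θ atTop atTop)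
    (hconv₁ : ∀ C : Set ℝ, IsCompact C → ∀ ε > 0, ∃ N, ∀ n ≥ N, ∀ t ∈ C,
      ‖h₁ (t + μ n) - h₁ t‖ < ε)
    (hconv₂ : ∀ C : Set ℝ, IsCompact C → ∀ ε > 0, ∃ N, ∀ n ≥ N, ∀ t ∈ C,
      ‖h₂ (t + μ n) - h₂ t‖ < ε)
    (ε₀ ε₁ r₁ : ℝ) (hε₀ : 0 < ε₀) (hε₁ : 0 < ε₁) (hr₁ : 0 < r₁)
    (hsep₁ : ∀ n, ∀ t ∈ Icc (θ n - r₁) (θ n + r₁), ε₀ ≤ ‖h₁ (t + μ n) - h₁ t‖)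
    (hsep₂ : ∀ n, ∀ t ∈ Icc (θ n - r₁) (θ n + r₁), ε₁ ≤ ‖h₂ (t + μ n) - h₂ t‖)
    (h : ℝ → WithLp 2 (EuclideanSpace ℝ (Fin p) × EuclideanSpace ℝ (Fin q)))
    (hh : ∀ t, h t = (WithLp.equiv 2 _).symm (h₁ t, h₂ t)) :
    Unpredictable h ∧
    (∀ n, ∀ t ∈ Icc (θ n - r₁) (θ n + r₁),
      Real.sqrt (ε₀ ^ 2 + ε₁ ^ 2) ≤ ‖h (t + μ n) - h t‖) := by
  have key : ∀ s t : ℝ, ‖h s - h t‖ = Real.sqrt (‖h₁ s - h₁ t‖^2 + ‖h₂ s - h₂ t‖^2) := by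
    intro s t
    rw [hh, hh, WithLp.equiv_symm_apply, ← WithLp.toLp_sub, Prod.mk_sub_mk, WithLp.prod_norm_eq_of_L2,
      WithLp.toLp_fst, WithLp.toLp_snd]
  have huc : UniformContinuous h := by
    have : h = (WithLp.equiv 2 _).symm ∘ (fun t => (h₁ t, h₂ t)) := by
      funext t; exact hh t
    rw [this]
    exact (WithLp.prod_uniformContinuous_toLp 2 _ _).comp (huc₁.prodMk huc₂)
  have hsep : ∀ n, ∀ t ∈ Icc (θ n - r₁) (θ n + r₁),
      Real.sqrt (ε₀ ^ 2 + ε₁ ^ 2) ≤ ‖h (t + μ n) - h t‖ := by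
    intro n t ht
    rw [key]
    apply Real.sqrt_le_sqrt
    gcongr
    · exact hsep₁ n t ht
    · exact hsep₂ n t ht
  refine ⟨⟨huc, Real.sqrt (ε₀ ^ 2 + ε₁ ^ 2), Real.sqrt_pos.2 (by positivity), r₁, hr₁,
    μ, θ, hμ, hθ, ?_, hsep⟩, hsep⟩
  intro C hC ε hε
  obtain ⟨N₁, hN₁⟩ := hconv₁ C hC (ε / 2) (by linarith)
  obtain ⟨N₂, hN₂⟩ := hconv₂ C hC (ε / 2) (by linarith)
  refine ⟨max N₁ N₂, fun n hn t ht => ?_⟩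
  rw [key]
  have e1 := hN₁ n (le_trans (le_max_left _ _) hn) t ht
  have e2 := hN₂ n (le_trans (le_max_right _ _) hn) t ht
  have h1 : ‖h₁ (t + μ n) - h₁ t‖ ^ 2 + ‖h₂ (t + μ n) - h₂ t‖ ^ 2
      ≤ (ε / 2) ^ 2 + (ε / 2) ^ 2 := by
    gcongr <;> first | exact norm_nonneg _ | exact e1.le | exact e2.le
  calc Real.sqrt (‖h₁ (t + μ n) - h₁ t‖ ^ 2 + ‖h₂ (t + μ n) - h₂ t‖ ^ 2)
      ≤ Real.sqrt ((ε / 2) ^ 2 + (ε / 2) ^ 2) := Real.sqrt_le_sqrt h1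
    _ < ε := by
        rw [show (ε/2)^2 + (ε/2)^2 = ε^2/2 by ring]
        have : Real.sqrt (ε^2/2) < Real.sqrt (ε^2) := by
          apply Real.sqrt_lt_sqrt (by positivity); linarith [sq_nonneg ε, pow_pos hε 2]
        rwa [Real.sqrt_sq hε.le] at this
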